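/- Let (a_n) be a sequence of real numbers with |a_i − L| ≤ M·i^{−m} for all i ≥ 1, where m > 1/2 and M ≥ 0 and L is a real number. Then √n·|(1/n)∑_{i=1}^n a_i − L| → 0 as n → ∞. -/

import Mathlib

open Filter

theorem stmt_10 (a : ℕ → ℝ) (L M m : ℝ) (hm : 1/2 < m) (hM : 0 ≤ M)
    (ha : ∀ i : ℕ, 1 ≤ i → |a i - L| ≤ M * (i : ℝ) ^ (-m)) :
    Tendsto (fun n : ℕ => Real.sqrt n * |(1 / n) * ∑ i ∈ Finset.Icc 1 n, a i - L|)
      atTop (nhds 0) := by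
  set p : ℝ := min m (3/4) with hpdef
  have hp1 : 1/2 < p := lt_min hm (by norm_num)
  have hp2 : p < 1 := lt_of_le_of_lt (min_le_right _ _) (by norm_num)
  have hpm : p ≤ m := min_le_left _ _
  have h1p : 0 < 1 - p := by linarith
  -- sum bound
  have hsum : ∀ n : ℕ, ∑ i ∈ Finset.Icc 1 n, (i : ℝ) ^ (-p) ≤ (n : ℝ) ^ (1 - p) / (1 - p) := by
    intro n
    induction n with
    | zero => simp [Real.zero_rpow (by linarith : (1:ℝ) - p ≠ 0)]
    | succ n ih =>
      rw [Finset.sum_Icc_succ_top (by omega : 1 ≤ n + 1)]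
      have hN : (0:ℝ) < (n + 1 : ℕ) := by positivity
      set N : ℝ := ((n + 1 : ℕ) : ℝ) with hNdef
      have hN1 : 1 ≤ N := by rw [hNdef]; push_cast; linarith [Nat.cast_nonneg (α := ℝ) n]
      have key : (1 - p) * N ^ (-p) ≤ N ^ (1 - p) - (n : ℝ) ^ (1 - p) := by
        have hfrac : (n : ℝ) / N = 1 + (-1 / N) := by
          field_simp
          push_cast [hNdef]
          ring
        have hbern : ((n : ℝ) / N) ^ (1 - p) ≤ 1 + (1 - p) * (-1 / N) := by
          rw [hfrac]
          exact rpow_one_add_le_one_add_mul_self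
            (by rw [neg_div]; simpa using div_le_one_of_le₀ hN1 (by linarith)) (le_of_lt h1p)
            (by linarith)
        have hmul : (n : ℝ) ^ (1 - p) = N ^ (1 - p) * ((n : ℝ) / N) ^ (1 - p) := by
          rw [← Real.mul_rpow (le_of_lt hN) (by positivity)]
          rw [mul_div_cancel₀ _ (ne_of_gt hN)]
        have hNp : N ^ (1 - p) / N = N ^ (-p) := by
          nth_rewrite 2 [show N = N ^ (1:ℝ) by rw [Real.rpow_one]]
          rw [← Real.rpow_sub hN]
          norm_num
        calc (1 - p) * N ^ (-p) = N ^ (1 - p) - N ^ (1 - p) * (1 + (1 - p) * (-1 / N)) := by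
              rw [← hNp]; field_simp; ring
          _ ≤ N ^ (1 - p) - (n : ℝ) ^ (1 - p) := by
              rw [hmul]
              have : (0:ℝ) < N ^ (1 - p) := Real.rpow_pos_of_pos hN _
              nlinarith [hbern]
      have : ∑ i ∈ Finset.Icc 1 n, (i : ℝ) ^ (-p) + N ^ (-p)
          ≤ (n : ℝ) ^ (1 - p) / (1 - p) + N ^ (-p) := by linarith
      calc ∑ i ∈ Finset.Icc 1 n, (i : ℝ) ^ (-p) + ((n+1 : ℕ) : ℝ) ^ (-p)
          ≤ (n : ℝ) ^ (1 - p) / (1 - p) + N ^ (-p) := this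
        _ ≤ N ^ (1 - p) / (1 - p) := by
            rw [div_add' _ _ _ (ne_of_gt h1p), div_le_div_iff_of_pos_right h1p]
            linarith
  -- pointwise bound for n ≥ 1
  have hbound : ∀ n : ℕ, 1 ≤ n →
      Real.sqrt n * |(1 / n : ℝ) * ∑ i ∈ Finset.Icc 1 n, a i - L|
        ≤ M / (1 - p) * (n : ℝ) ^ (1/2 - p) := by
    intro n hn
    have hn0 : (0:ℝ) < n := by exact_mod_cast hn
    have hcard : (Finset.Icc 1 n).card = n := by simp
    have h1 : (1 / n : ℝ) * ∑ i ∈ Finset.Icc 1 n, a i - L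
        = (1 / n : ℝ) * ∑ i ∈ Finset.Icc 1 n, (a i - L) := by
      rw [Finset.sum_sub_distrib, Finset.sum_const, hcard]
      field_simp
      rw [nsmul_eq_mul]
    have h2 : |(1 / n : ℝ) * ∑ i ∈ Finset.Icc 1 n, a i - L|
        ≤ (1 / n) * (M * ((n : ℝ) ^ (1 - p) / (1 - p))) := by
      rw [h1, abs_mul, abs_of_nonneg (by positivity : (0:ℝ) ≤ 1 / n)]
      gcongr
      calc |∑ i ∈ Finset.Icc 1 n, (a i - L)| ≤ ∑ i ∈ Finset.Icc 1 n, |a i - L| :=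
            Finset.abs_sum_le_sum_abs _ _
        _ ≤ ∑ i ∈ Finset.Icc 1 n, M * (i : ℝ) ^ (-p) := by
            apply Finset.sum_le_sum
            intro i hi
            have hi1 : 1 ≤ i := (Finset.mem_Icc.1 hi).1
            refine le_trans (ha i hi1) ?_
            have hi1' : (1:ℝ) ≤ (i:ℝ) := by exact_mod_cast hi1
            gcongr <;> linarith
        _ = M * ∑ i ∈ Finset.Icc 1 n, (i : ℝ) ^ (-p) := by rw [Finset.mul_sum]
        _ ≤ M * ((n : ℝ) ^ (1 - p) / (1 - p)) := by
            exact mul_le_mul_of_nonneg_left (hsum n) hM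
    calc Real.sqrt n * |(1 / n : ℝ) * ∑ i ∈ Finset.Icc 1 n, a i - L|
        ≤ Real.sqrt n * ((1 / n) * (M * ((n : ℝ) ^ (1 - p) / (1 - p)))) := by
          exact mul_le_mul_of_nonneg_left h2 (Real.sqrt_nonneg _)
      _ = M / (1 - p) * (n : ℝ) ^ (1/2 - p) := by
          rw [Real.sqrt_eq_rpow]
          rw [show (1/2 : ℝ) - p = 1/2 + (1 - p) + (-1) by ring]
          rw [Real.rpow_add hn0, Real.rpow_add hn0, Real.rpow_neg_one]
          field_simp
  -- squeeze
  have hlim : Tendsto (fun n : ℕ => M / (1 - p) * (n : ℝ) ^ (1/2 - p)) atTop (nhds 0) := by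
    rw [show (0:ℝ) = M / (1 - p) * 0 by ring]
    apply Tendsto.const_mul
    have : Tendsto (fun x : ℝ => x ^ (-(p - 1/2))) atTop (nhds 0) :=
      tendsto_rpow_neg_atTop (by linarith)
    have := this.comp (tendsto_natCast_atTop_atTop (R := ℝ))
    simpa [Function.comp_def, neg_sub] using this
  exact squeeze_zero'
    (Eventually.of_forall fun n => mul_nonneg (Real.sqrt_nonneg _) (abs_nonneg _))
    (by filter_upwards [eventually_ge_atTop 1] with n hn using hbound n hn) hlim
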